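/- Let G be a group with a finite word gauge and μ a probability measure on G with finite first moment Σ_g |g| μ(g) < ∞. Then μ has finite entropy H(μ) = −Σ_g μ(g) log μ(g) < ∞. -/

import Mathlib

/-- `negMulLog x ≤ 1/e` for nonnegative real `x`. -/
lemma negMulLog_le_inv_e {x : ℝ} (hx : 0 ≤ x) : Real.negMulLog x ≤ (Real.exp 1)⁻¹ := by
  rcases hx.lt_or_eq with hx | hx
  · have h1 : Real.log ((Real.exp 1 * x)⁻¹) ≤ (Real.exp 1 * x)⁻¹ - 1 :=
      Real.log_le_sub_one_of_pos (by positivity)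
    have h2 : Real.log ((Real.exp 1 * x)⁻¹) = -1 - Real.log x := by
      rw [Real.log_inv, Real.log_mul (Real.exp_ne_zero 1) hx.ne', Real.log_exp]; ring
    have h3 : (Real.exp 1 * x)⁻¹ = (Real.exp 1)⁻¹ * x⁻¹ := by
      rw [mul_inv]
    have h4 : -Real.log x ≤ (Real.exp 1)⁻¹ * x⁻¹ := by
      rw [h2, h3] at h1; linarith
    have := mul_le_mul_of_nonneg_left h4 hx.le
    rw [Real.negMulLog, neg_mul, ← mul_neg]
    calc x * -Real.log x ≤ x * ((Real.exp 1)⁻¹ * x⁻¹) := this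
      _ = (Real.exp 1)⁻¹ := by field_simp
  · rw [← hx]
    simp only [Real.negMulLog_zero]
    positivity

/-- key pointwise bound: for `0 ≤ p` and `0 ≤ t`,
`negMulLog p ≤ p * t + exp (-t) / e`. -/
lemma negMulLog_le_linear {p t : ℝ} (hp : 0 ≤ p) :
    Real.negMulLog p ≤ p * t + Real.exp (-t) * (Real.exp 1)⁻¹ := by
  have key : Real.negMulLog p = p * t + Real.exp (-t) * Real.negMulLog (p * Real.exp t) := by
    rcases hp.lt_or_eq with hp | hp
    · rw [Real.negMulLog, Real.negMulLog,
        Real.log_mul hp.ne' (Real.exp_ne_zero t), Real.log_exp]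
      rw [Real.exp_neg]
      field_simp
      ring
    · simp [← hp]
  rw [key]
  have := negMulLog_le_inv_e (x := p * Real.exp t) (by positivity)
  have hexp : (0:ℝ) ≤ Real.exp (-t) := (Real.exp_pos _).le
  nlinarith [mul_le_mul_of_nonneg_left this hexp]

/-- Finite first moment implies finite entropy: if `ℓ` is a finite word gauge on a
group `G` (gauge sets are finite, of at most exponential growth) and `μ` is a
probability measure with finite first moment `∑ ℓ(g) μ(g) < ∞`, then `μ` has
finite entropy `H(μ) = -∑ μ(g) log μ(g) < ∞`. -/
theorem stmt17 {G : Type*} [Group G] [Countable G]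
    (ℓ : G → ℕ) (C : ℝ) (hC : 1 ≤ C)
    (hfin : ∀ k : ℕ, {g : G | ℓ g ≤ k}.Finite)
    (hball : ∀ k : ℕ, (Nat.card {g : G // ℓ g ≤ k} : ℝ) ≤ C ^ (k + 1))
    (μ : PMF G)
    (hmom : ∑' g : G, (ℓ g : ENNReal) * μ g ≠ ⊤) :
    Summable fun g : G => Real.negMulLog ((μ g).toReal) := by
  set a : ℝ := Real.log C + 1 with ha
  have hC0 : (0:ℝ) < C := lt_of_lt_of_le one_pos hC
  have ha0 : 0 < a := by
    have := Real.log_nonneg hC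
    linarith
  -- Summability of the first moment in ℝ
  have hmom' : Summable fun g : G => (ℓ g : ℝ) * (μ g).toReal := by
    have := ENNReal.summable_toReal hmom
    convert this using 2 with g
    simp [ENNReal.toReal_mul]
  -- Summability of g ↦ exp (-(a * ℓ g))
  have hgeom : Summable fun g : G => Real.exp (-(a * (ℓ g : ℝ))) := by
    apply summable_of_sum_le (c := C * (1 - (Real.exp 1)⁻¹)⁻¹)
      (fun g => (Real.exp_pos _).le)
    intro u
    set k := u.sup ℓ with hk
    have hmaps : ∀ g ∈ u, ℓ g ∈ Finset.range (k + 1) := fun g hg =>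
      Finset.mem_range.mpr (Nat.lt_succ_of_le (Finset.le_sup hg))
    rw [← Finset.sum_fiberwise_of_maps_to hmaps]
    have step1 : ∀ j ∈ Finset.range (k + 1),
        (∑ g ∈ u.filter (fun g => ℓ g = j), Real.exp (-(a * (ℓ g : ℝ))))
          ≤ C * ((Real.exp 1)⁻¹) ^ j := by
      intro j _
      have hval : ∀ g ∈ u.filter (fun g => ℓ g = j),
          Real.exp (-(a * (ℓ g : ℝ))) = Real.exp (-(a * (j : ℝ))) := by
        intro g hg
        rw [(Finset.mem_filter.mp hg).2]
      rw [Finset.sum_congr rfl hval, Finset.sum_const, nsmul_eq_mul]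
      have hcard : ((u.filter (fun g => ℓ g = j)).card : ℝ) ≤ C ^ (j + 1) := by
        refine le_trans ?_ (hball j)
        have hsub : (u.filter (fun g => ℓ g = j) : Set G) ⊆ {g : G | ℓ g ≤ j} := by
          intro g hg
          simp only [Finset.coe_filter, Set.mem_setOf_eq] at hg ⊢
          exact hg.2.le
        have := Set.ncard_le_ncard hsub (hfin j)
        rw [Set.ncard_coe_finset] at this
        have hn : Nat.card {g : G // ℓ g ≤ j} = ({g : G | ℓ g ≤ j} : Set G).ncard :=
          Nat.card_coe_set_eq _
        rw [hn]
        exact_mod_cast this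
      have hexpval : Real.exp (-(a * (j : ℝ))) = (Real.exp 1)⁻¹ ^ j / C ^ j := by
        have e1 : Real.exp (-(a * (j : ℝ))) = Real.exp (-a) ^ j := by
          rw [show -(a * (j : ℝ)) = (j : ℝ) * (-a) by ring, Real.exp_nat_mul]
        have e2 : Real.exp (-a) = (Real.exp 1)⁻¹ / C := by
          rw [ha, Real.exp_neg, Real.exp_add, Real.exp_log hC0, mul_inv, mul_comm,
            div_eq_mul_inv]
        rw [e1, e2, div_pow]
      rw [hexpval]
      rw [div_eq_mul_inv, ← mul_assoc]
      have h1 : ((u.filter (fun g => ℓ g = j)).card : ℝ) * (Real.exp 1)⁻¹ ^ j * (C ^ j)⁻¹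
          ≤ C ^ (j+1) * (Real.exp 1)⁻¹ ^ j * (C ^ j)⁻¹ := by
        have : (0:ℝ) ≤ (Real.exp 1)⁻¹ ^ j * (C ^ j)⁻¹ := by positivity
        nlinarith [mul_le_mul_of_nonneg_right hcard this]
      refine h1.trans (le_of_eq ?_)
      rw [pow_succ]
      field_simp
    calc ∑ j ∈ Finset.range (k + 1), ∑ g ∈ u.filter (fun g => ℓ g = j),
            Real.exp (-(a * (ℓ g : ℝ)))
        ≤ ∑ j ∈ Finset.range (k + 1), C * ((Real.exp 1)⁻¹) ^ j :=
          Finset.sum_le_sum step1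
      _ = C * ∑ j ∈ Finset.range (k + 1), ((Real.exp 1)⁻¹) ^ j := by
          rw [Finset.mul_sum]
      _ ≤ C * (1 - (Real.exp 1)⁻¹)⁻¹ := by
          apply mul_le_mul_of_nonneg_left _ hC0.le
          have hr0 : (0:ℝ) ≤ (Real.exp 1)⁻¹ := by positivity
          have hr1 : (Real.exp 1)⁻¹ < 1 := by
            rw [inv_lt_one_iff₀]
            right
            exact lt_trans one_lt_two (by
              have := Real.add_one_lt_exp (x := 1) one_ne_zero
              linarith)
          have hsum := summable_geometric_of_lt_one hr0 hr1
          have := Summable.sum_le_tsum (Finset.range (k + 1))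
            (fun i _ => by positivity) hsum
          rwa [tsum_geometric_of_lt_one hr0 hr1] at this
  -- combine
  have hbound : Summable fun g : G =>
      a * ((ℓ g : ℝ) * (μ g).toReal) + Real.exp (-(a * (ℓ g : ℝ))) * (Real.exp 1)⁻¹ :=
    ((hmom'.mul_left a).add (hgeom.mul_right _))
  refine Summable.of_nonneg_of_le (fun g => ?_) (fun g => ?_) hbound
  · apply Real.negMulLog_nonneg ENNReal.toReal_nonneg
    exact ENNReal.toReal_le_of_le_ofReal one_pos.le (by simpa using μ.coe_le_one g)
  · have := negMulLog_le_linear (p := (μ g).toReal) (t := a * (ℓ g : ℝ))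
      ENNReal.toReal_nonneg
    calc Real.negMulLog ((μ g).toReal)
        ≤ (μ g).toReal * (a * (ℓ g : ℝ)) + Real.exp (-(a * (ℓ g : ℝ))) * (Real.exp 1)⁻¹ := this
      _ = a * ((ℓ g : ℝ) * (μ g).toReal) + Real.exp (-(a * (ℓ g : ℝ))) * (Real.exp 1)⁻¹ := by
          ring
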